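/- If every left 3-Engel element of every group lies in the Hirsch–Plotkin (locally nilpotent) radical of that group, then every finitely generated sandwich group is nilpotent; conversely, if every finitely generated sandwich group is nilpotent, then every left 3-Engel element of any group lies in the locally nilpotent radical. -/

import Mathlib

section Defs

variable {G : Type*} [Group G]

/-- Group commutator `[x,y] = x⁻¹ y⁻¹ x y`. -/
def bra (x y : G) : G := x⁻¹ * y⁻¹ * x * y

/-- Conjugation `g^h = h⁻¹ g h`. -/
def cnj (g h : G) : G := h⁻¹ * g * h

/-- A subgroup is nilpotent of class at most `n`. -/
def NilClassLe (H : Subgroup G) (n : ℕ) : Prop :=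
  upperCentralSeries H n = ⊤

/-- A subgroup is locally nilpotent. -/
def LocallyNilpotentSubgroup (N : Subgroup G) : Prop :=
  ∀ S : Set G, S.Finite → S ⊆ N → Group.IsNilpotent (Subgroup.closure S)

/-- `a` is a left 3-Engel element of `G`. -/
def LeftThreeEngel (a : G) : Prop :=
  ∀ x : G, bra (bra (bra x a) a) a = 1

/-- `a` lies in the Hirsch–Plotkin (locally nilpotent) radical of `G`: it belongs to
some locally nilpotent normal subgroup. -/
def InHPRadical (a : G) : Prop :=
  ∃ N : Subgroup G, N.Normal ∧ LocallyNilpotentSubgroup N ∧ a ∈ N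

/-- `X` is a sandwich set in `G`. -/
def SandwichSet (X : Set G) : Prop :=
  ∀ a ∈ X, ∀ b ∈ X, ∀ g ∈ Subgroup.closure X,
    NilClassLe (Subgroup.closure {a, cnj b g}) 2

end Defs


section EngelTools

variable {G : Type*} [Group G]

theorem bra_eq_one_iff {x y : G} : bra x y = 1 ↔ x * y = y * x := by
  have h : bra x y = (y * x)⁻¹ * (x * y) := by simp [bra]; group
  rw [h, inv_mul_eq_one, eq_comm]

theorem map_bra {H : Type*} [Group H] (f : G →* H) (x y : G) :
    f (bra x y) = bra (f x) (f y) := by simp [bra]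

theorem cnj_cnj (a g h : G) : cnj (cnj a g) h = cnj a (g * h) := by
  simp [cnj]; group

theorem cnj_one (a : G) : cnj a 1 = a := by simp [cnj]

theorem bra_cnj (x y g : G) : bra (cnj x g) (cnj y g) = cnj (bra x y) g := by
  simp [bra, cnj]; group

theorem bra_inv_eq (x y : G) : (bra x y)⁻¹ = bra y x := by simp [bra]; group

theorem bra_self (x : G) : bra x x = 1 := by simp [bra]
theorem bra_one_left (x : G) : bra 1 x = 1 := by simp [bra]
theorem bra_one_right (x : G) : bra x 1 = 1 := by simp [bra]

theorem bra_mul_right (x y z : G) : bra x (y * z) = bra x z * cnj (bra x y) z := by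
  simp [bra, cnj]; group

theorem bra_mul_left (x y z : G) : bra (x * y) z = cnj (bra x z) y * bra y z := by
  simp [bra, cnj]; group

theorem bra_inv_right (x y : G) : bra x y⁻¹ = cnj (bra x y)⁻¹ y⁻¹ := by
  simp [bra, cnj]; group

theorem bra_inv_left (x y : G) : bra x⁻¹ y = cnj (bra x y)⁻¹ x⁻¹ := by
  simp [bra, cnj]; group

theorem coe_bra {H : Subgroup G} (u v : H) :
    ((bra u v : H) : G) = bra (u : G) (v : G) := by simp [bra]

theorem coe_cnj {H : Subgroup G} (u v : H) :
    ((cnj u v : H) : G) = cnj (u : G) (v : G) := by simp [cnj]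

theorem ucs2_iff {Γ : Type*} [Group Γ] :
    upperCentralSeries Γ 2 = ⊤ ↔ ∀ u v w : Γ, bra (bra u v) w = 1 := by
  constructor
  · intro h u v w
    have hu : u⁻¹ ∈ upperCentralSeries Γ 2 := h ▸ Subgroup.mem_top _
    have h2 := (mem_upperCentralSeries_succ_iff (n := 1)).mp hu v⁻¹
    rw [upperCentralSeries_one] at h2
    have h3 : bra u v ∈ Subgroup.center Γ := by
      convert h2 using 1; simp [bra, commutatorElement_def]
    rw [bra_eq_one_iff]
    exact (Subgroup.mem_center_iff.mp h3 w).symm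
  · intro h
    rw [eq_top_iff]
    intro x _
    refine (mem_upperCentralSeries_succ_iff (n := 1)).mpr ?_
    intro y
    rw [upperCentralSeries_one, Subgroup.mem_center_iff]
    intro z
    have hx := h x⁻¹ y⁻¹ z
    rw [bra_eq_one_iff] at hx
    have hb : bra x⁻¹ y⁻¹ = x * y * x⁻¹ * y⁻¹ := by simp [bra]
    rw [hb] at hx
    exact hx.symm

theorem nilClassLe_two_iff (H : Subgroup G) :
    NilClassLe H 2 ↔ ∀ u ∈ H, ∀ v ∈ H, ∀ w ∈ H, bra (bra u v) w = 1 := by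
  unfold NilClassLe
  rw [ucs2_iff]
  constructor
  · intro h u hu v hv w hw
    have h1 := h ⟨u, hu⟩ ⟨v, hv⟩ ⟨w, hw⟩
    have h2 := congrArg (Subtype.val) h1
    rwa [coe_bra, coe_bra] at h2
  · intro h u v w
    apply Subtype.ext
    rw [coe_bra, coe_bra]
    simpa using h u u.2 v v.2 w w.2

theorem conj_comm_cancel {x v : G}
    (h : (v⁻¹ * x * v) * v = v * (v⁻¹ * x * v)) : x * v = v * x := by
  have h2 : v⁻¹ * (x * v * v) = v⁻¹ * ((v * x) * v) := by
    calc v⁻¹ * (x * v * v) = (v⁻¹ * x * v) * v := by group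
    _ = v * (v⁻¹ * x * v) := h
    _ = v⁻¹ * ((v * x) * v) := by group
  exact mul_right_cancel (mul_left_cancel h2)

theorem ckey (u v : G) (h : bra (bra (bra u v) v) v = 1) :
    v * cnj v (cnj v u) = cnj v (cnj v u) * v := by
  set d := cnj v u with hd
  have h1 : (bra (bra u v) v) * v = v * (bra (bra u v) v) := bra_eq_one_iff.mp h
  have idB : bra (bra u v) v = v⁻¹ * (d * v⁻¹ * d⁻¹ * v) * v := by
    rw [hd]; simp [bra, cnj]; group
  rw [idB] at h1
  have h2 := conj_comm_cancel h1
  have h3 : (d * v⁻¹ * d⁻¹) * v = v * (d * v⁻¹ * d⁻¹) := by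
    apply mul_right_cancel (b := v)
    calc (d * v⁻¹ * d⁻¹) * v * v = (d * v⁻¹ * d⁻¹ * v) * v := by group
    _ = v * (d * v⁻¹ * d⁻¹ * v) := h2
    _ = (v * (d * v⁻¹ * d⁻¹)) * v := by group
  have c3 : Commute (d * v⁻¹ * d⁻¹) v := h3
  have c4 := c3.inv_left
  have c4e : (d * v * d⁻¹) * v = v * (d * v * d⁻¹) := by
    have he : (d * v⁻¹ * d⁻¹)⁻¹ = d * v * d⁻¹ := by group
    have h5 := c4.eq
    rwa [he] at h5
  have h5 : v * (d⁻¹ * v * d) = (d⁻¹ * v * d) * v := by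
    apply mul_left_cancel (a := d)
    apply mul_right_cancel (b := d⁻¹)
    calc d * (v * (d⁻¹ * v * d)) * d⁻¹ = (d * v * d⁻¹) * v := by group
    _ = v * (d * v * d⁻¹) := c4e
    _ = d * ((d⁻¹ * v * d) * v) * d⁻¹ := by group
  have hc : cnj v d = d⁻¹ * v * d := rfl
  rw [hc]
  exact h5

theorem engel_conj {a : G} (h : LeftThreeEngel a) (p y : G) :
    bra (bra (bra y (cnj a p)) (cnj a p)) (cnj a p) = 1 := by
  have h0 := h (cnj y p⁻¹)
  have e1 := congrArg (fun t => cnj t p) h0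
  simp only [← bra_cnj] at e1
  rw [cnj_cnj, inv_mul_cancel, cnj_one] at e1
  simpa [cnj] using e1

theorem sc {a : G} (h : LeftThreeEngel a) (p q : G) :
    (cnj a p) * cnj (cnj a p) (cnj a q) = cnj (cnj a p) (cnj a q) * (cnj a p) := by
  have h1 := engel_conj h p (p⁻¹ * q)
  have h2 := ckey (p⁻¹ * q) (cnj a p) h1
  have e : cnj (cnj a p) (p⁻¹ * q) = cnj a q := by
    rw [cnj_cnj]; congr 1; group
  rwa [e] at h2

theorem seed1 {a : G} (h : LeftThreeEngel a) (p q : G) :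
    Commute (bra (cnj a p) (cnj a q)) (cnj a p) := by
  have e : bra (cnj a p) (cnj a q) = (cnj a p)⁻¹ * cnj (cnj a p) (cnj a q) := by
    simp [bra, cnj, mul_assoc]
  rw [e]
  exact Commute.mul_left (Commute.refl (cnj a p)).inv_left ((sc h p q)).symm

theorem seed2 {a : G} (h : LeftThreeEngel a) (p q : G) :
    Commute (bra (cnj a p) (cnj a q)) (cnj a q) := by
  have e : bra (cnj a p) (cnj a q) = (cnj (cnj a q) (cnj a p))⁻¹ * cnj a q := by
    simp [bra, cnj, mul_assoc]
  rw [e]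
  have hcom : Commute (cnj a q) (cnj (cnj a q) (cnj a p)) := sc h q p
  exact Commute.mul_left hcom.symm.inv_left (Commute.refl (cnj a q))

theorem cnj_mem_centralizer {P : Subgroup G} {c g : G}
    (hc : c ∈ Subgroup.centralizer (P : Set G)) (hg : g ∈ P) :
    cnj c g ∈ Subgroup.centralizer (P : Set G) := by
  rw [Subgroup.mem_centralizer_iff] at hc ⊢
  intro h hh
  have hgh : g * h * g⁻¹ ∈ P := mul_mem (mul_mem hg hh) (inv_mem hg)
  have e := hc (g * h * g⁻¹) hgh
  show h * cnj c g = cnj c g * h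
  calc h * cnj c g = g⁻¹ * ((g * h * g⁻¹) * c) * g := by simp [cnj]; group
  _ = g⁻¹ * (c * (g * h * g⁻¹)) * g := by rw [e]
  _ = cnj c g * h := by simp [cnj]; group

theorem key3 {a : G} (h : LeftThreeEngel a) (p q : G) :
    ∀ u ∈ Subgroup.closure {cnj a p, cnj a q},
    ∀ v ∈ Subgroup.closure {cnj a p, cnj a q},
    ∀ w ∈ Subgroup.closure {cnj a p, cnj a q}, bra (bra u v) w = 1 := by
  set P := Subgroup.closure {cnj a p, cnj a q} with hP
  set C := Subgroup.centralizer (P : Set G) with hC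
  have hcen : ∀ x ∈ ({cnj a p, cnj a q} : Set G), ∀ y ∈ ({cnj a p, cnj a q} : Set G),
      bra x y ∈ C := by
    have hseed : bra (cnj a p) (cnj a q) ∈ C := by
      rw [hC, Subgroup.mem_centralizer_iff]
      intro g hg
      have hle : P ≤ Subgroup.centralizer {bra (cnj a p) (cnj a q)} := by
        rw [hP]
        apply Subgroup.closure_le _ |>.mpr
        intro x hx
        simp only [SetLike.mem_coe]
        rcases hx with rfl | hx
        · rw [Subgroup.mem_centralizer_iff]
          rintro z rfl
          exact (seed1 h p q).eq
        · rw [Set.mem_singleton_iff] at hx; subst hx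
          rw [Subgroup.mem_centralizer_iff]
          rintro z rfl
          exact (seed2 h p q).eq
      have h2 := (Subgroup.mem_centralizer_iff.mp (hle hg)) _ rfl
      exact h2.symm
    intro x hx y hy
    rcases hx with rfl | hx
    · rcases hy with rfl | hy
      · rw [bra_self]; exact one_mem _
      · rw [Set.mem_singleton_iff] at hy; subst hy; exact hseed
    · rw [Set.mem_singleton_iff] at hx; subst hx
      rcases hy with rfl | hy
      · rw [← bra_inv_eq]; exact inv_mem hseed
      · rw [Set.mem_singleton_iff] at hy; subst hy
        rw [bra_self]; exact one_mem _
  have hmain : ∀ u ∈ P, ∀ v ∈ P, bra u v ∈ C := by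
    intro u hu
    induction hu using Subgroup.closure_induction with
    | mem x hx =>
      intro v hv
      induction hv using Subgroup.closure_induction with
      | mem y hy => exact hcen x hx y hy
      | one => rw [bra_one_right]; exact one_mem _
      | mul y z hy hz ihy ihz =>
        rw [bra_mul_right]
        exact mul_mem ihz (cnj_mem_centralizer ihy hz)
      | inv y hy ihy =>
        rw [bra_inv_right]
        exact cnj_mem_centralizer (inv_mem ihy) (inv_mem hy)
    | one => intro v hv; rw [bra_one_left]; exact one_mem _
    | mul x y hx hy ihx ihy =>
      intro v hv
      rw [bra_mul_left]
      exact mul_mem (cnj_mem_centralizer (ihx v hv) hy) (ihy v hv)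
    | inv x hx ihx =>
      intro v hv
      rw [bra_inv_left]
      exact cnj_mem_centralizer (inv_mem (ihx v hv)) (inv_mem hx)
  intro u hu v hv w hw
  rw [bra_eq_one_iff]
  exact ((Subgroup.mem_centralizer_iff.mp (hmain u hu v hv)) w hw).symm

end EngelTools

section Forward

open SemidirectProduct Subgroup

variable {G : Type} [Group G] (X : Set G)

/-- permutation action on `↥X → G` -/
def PhiX : Equiv.Perm ↥X →* MulAut (↥X → G) where
  toFun π := MulEquiv.arrowCongr π (MulEquiv.refl G)
  map_one' := by ext f i; simp [MulEquiv.arrowCongr]; rfl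
  map_mul' π ρ := by ext f i; simp [MulEquiv.arrowCongr, Equiv.Perm.mul_def]

abbrev Gam (X : Set G) := (↥X → G) ⋊[PhiX X] Equiv.Perm ↥X

def bb : Gam X := inl (fun x => x.val)

theorem phiX_apply (π : Equiv.Perm ↥X) (h : ↥X → G) (i : ↥X) :
    (PhiX X π) h i = h (π.symm i) := rfl

theorem phiX_inv_apply (π : Equiv.Perm ↥X) (h : ↥X → G) (i : ↥X) :
    ((PhiX X π)⁻¹ h) i = h (π i) := by
  rw [← map_inv]
  rfl

theorem cnj_inl {N H : Type*} [Group N] [Group H] {φ : H →* MulAut N} (n : N)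
    (z : N ⋊[φ] H) :
    cnj (SemidirectProduct.inl n) z
      = SemidirectProduct.inl ((φ z.right)⁻¹ (z.left⁻¹ * n * z.left)) := by
  have h0 : cnj (SemidirectProduct.inl n) z
      = z⁻¹ * SemidirectProduct.inl n * z := rfl
  rw [h0]
  conv_lhs => rw [← inl_left_mul_inr_right z]
  calc (inl z.left * inr z.right)⁻¹ * inl n * (inl z.left * inr z.right)
      = inr z.right⁻¹ * (inl z.left⁻¹ * inl n * inl z.left) * inr z.right := by
        rw [mul_inv_rev, ← map_inv, ← map_inv]; simp [mul_assoc]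
    _ = inr z.right⁻¹ * inl (z.left⁻¹ * n * z.left) * inr z.right := by
        rw [← map_mul, ← map_mul]
    _ = inl ((φ z.right)⁻¹ (z.left⁻¹ * n * z.left)) := (inl_aut_inv _ _).symm

theorem cnj_bb (z : Gam X) :
    cnj (bb X) z = inl ((PhiX X z.right)⁻¹ (z.left⁻¹ * (fun (x : ↥X) => x.val) * z.left)) :=
  cnj_inl _ z

theorem bb_engel (hX : SandwichSet X) (htop : Subgroup.closure X = ⊤) :
    LeftThreeEngel (bb X) := by
  intro z
  set m : ↥X → G := (PhiX X z.right)⁻¹ (z.left⁻¹ * (fun (x : ↥X) => x.val) * z.left) with hm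
  have h1 : cnj (bb X) z = inl m := cnj_bb X z
  have h2 : bra z (bb X) = inl (m⁻¹ * (fun x => x.val)) := by
    have e : bra z (bb X) = (cnj (bb X) z)⁻¹ * (bb X) := by simp [bra, cnj]; group
    rw [e, h1]
    unfold bb
    rw [← map_inv, ← map_mul]
  have hsuff : ∀ i : ↥X, bra (bra ((m i)⁻¹ * (i : G)) (i : G)) (i : G) = 1 := by
    intro i
    have hmi : m i = cnj ((z.right i : G)) (z.left (z.right i)) := by
      rw [hm, phiX_inv_apply]
      simp [cnj]
    rw [hmi]
    set A : G := (i : G)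
    set B : G := ((z.right i : ↥X) : G)
    set g : G := z.left (z.right i)
    have hns := hX A i.2 B (z.right i).2 g (by rw [htop]; exact Subgroup.mem_top g)
    have h3 := (nilClassLe_two_iff _).mp hns
    have hAmem : A ∈ Subgroup.closure {A, cnj B g} :=
      Subgroup.subset_closure (Set.mem_insert _ _)
    have hCmem : cnj B g ∈ Subgroup.closure {A, cnj B g} :=
      Subgroup.subset_closure (Set.mem_insert_iff.mpr (Or.inr rfl))
    exact h3 _ (mul_mem (inv_mem hCmem) hAmem) _ hAmem _ hAmem
  have hfun : (bra (bra (m⁻¹ * fun (x : ↥X) => x.val) (fun (x : ↥X) => x.val))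
      (fun (x : ↥X) => x.val)) = (1 : ↥X → G) := funext fun i => hsuff i
  rw [h2]
  unfold bb
  calc bra (bra (inl (m⁻¹ * fun (x : ↥X) => x.val)) (inl fun (x : ↥X) => x.val))
        (inl fun (x : ↥X) => x.val)
      = inl (bra (bra (m⁻¹ * fun (x : ↥X) => x.val) (fun (x : ↥X) => x.val))
        (fun (x : ↥X) => x.val)) := by rw [map_bra, map_bra]
    _ = inl 1 := by rw [hfun]
    _ = 1 := map_one _


theorem forward_dir
    (hyp : ∀ (G : Type) (_ : Group G) (a : G), LeftThreeEngel a → InHPRadical a)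
    (G : Type) (inst : Group G) (X : Set G) (hfin : X.Finite) (hX : SandwichSet X)
    (htop : Subgroup.closure X = ⊤) : Group.IsNilpotent G := by
  classical
  rcases Set.eq_empty_or_nonempty X with hE | hne
  · subst hE
    rw [Subgroup.closure_empty] at htop
    have hsub : ∀ g : G, g = 1 := fun g => Subgroup.mem_bot.mp (htop ▸ Subgroup.mem_top g)
    refine ⟨1, ?_⟩
    rw [Subgroup.upperCentralSeries_one, eq_top_iff]
    intro g _
    rw [Subgroup.mem_center_iff]
    intro z
    rw [hsub g, hsub z]
  obtain ⟨N, hNnorm, hNln, hbN⟩ := hyp (Gam X) inferInstance (bb X) (bb_engel X hX htop)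
  obtain ⟨x₀, hx₀⟩ := hne
  haveI : Finite ↥X := hfin.to_subtype
  set pt : ↥X := ⟨x₀, hx₀⟩ with hpt
  set t : ↥X → (↥X → G) := fun w => fun i => ((Equiv.swap pt w) i).val with ht
  set T₀ : Set (↥X → G) := Set.range t with hT₀
  have hTN : ∀ w : ↥X, (inl (t w) : Gam X) ∈ N := by
    intro w
    have hc : cnj (bb X) (inr (Equiv.swap pt w)) = inl (t w) := by
      rw [show bb X = inl (fun (x : ↥X) => x.val) from rfl, cnj_inl]
      congr 1
      funext i
      rw [left_inr, right_inr, inv_one, one_mul, mul_one, phiX_inv_apply]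
    rw [← hc]
    have hmem := hNnorm.conj_mem _ hbN (inr (Equiv.swap pt w))⁻¹
    rw [inv_inv] at hmem
    exact hmem
  have hfinT : ((inl : (↥X → G) →* Gam X) '' T₀ : Set (Gam X)).Finite :=
    ((Set.finite_range t).image _)
  have hnilT := hNln ((inl : (↥X → G) →* Gam X) '' T₀) hfinT
    (by rintro s ⟨f, ⟨w, rfl⟩, rfl⟩; exact hTN w)
  rw [show Subgroup.closure ((inl : (↥X → G) →* Gam X) '' T₀)
      = (Subgroup.closure T₀).map inl from (MonoidHom.map_closure _ _).symm] at hnilT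
  haveI : Group.IsNilpotent
      ↥((Subgroup.closure T₀).map (inl : (↥X → G) →* Gam X)) := hnilT
  haveI hnil₀ : Group.IsNilpotent ↥(Subgroup.closure T₀) :=
    nilpotent_of_mulEquiv
      ((Subgroup.closure T₀).equivMapOfInjective (inl : (↥X → G) →* Gam X) inl_injective).symm
  set ev : (↥X → G) →* G := Pi.evalMonoidHom (fun _ : ↥X => G) pt with hev
  have himg : ev '' T₀ = X := by
    ext y
    constructor
    · rintro ⟨f, ⟨w, rfl⟩, rfl⟩
      show ((Equiv.swap pt w) pt).val ∈ X
      rw [Equiv.swap_apply_left]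
      exact w.2
    · intro hy
      refine ⟨t ⟨y, hy⟩, ⟨⟨y, hy⟩, rfl⟩, ?_⟩
      show ((Equiv.swap pt ⟨y, hy⟩) pt).val = y
      rw [Equiv.swap_apply_left]
  have hclX : Subgroup.closure X = (Subgroup.closure T₀).map ev := by
    rw [MonoidHom.map_closure, himg]
  have hnilX : Group.IsNilpotent ↥((Subgroup.closure T₀).map ev) :=
    nilpotent_of_surjective (ev.subgroupMap _) (MonoidHom.subgroupMap_surjective _ _)
  rw [← hclX, htop] at hnilX
  haveI := hnilX
  exact nilpotent_of_mulEquiv Subgroup.topEquiv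

end Forward

section Reverse

theorem reverse_dir
    (hyp : ∀ (G : Type) (_ : Group G) (X : Set G), X.Finite → SandwichSet X →
      Subgroup.closure X = ⊤ → Group.IsNilpotent G)
    (G : Type) (inst : Group G) (a : G) (ha : LeftThreeEngel a) : InHPRadical a := by
  classical
  refine ⟨Subgroup.normalClosure {a}, Subgroup.normalClosure_normal, ?_,
    Subgroup.subset_normalClosure rfl⟩
  intro S hSfin hSsub
  have hfin_ex : ∀ s ∈ Subgroup.closure (Group.conjugatesOfSet {a}),
      ∃ D : Set G, D.Finite ∧ D ⊆ Group.conjugatesOfSet {a} ∧ s ∈ Subgroup.closure D := by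
    intro s hs
    induction hs using Subgroup.closure_induction with
    | mem x hx => exact ⟨{x}, Set.finite_singleton x, by simpa using hx,
        Subgroup.subset_closure rfl⟩
    | one => exact ⟨∅, Set.finite_empty, Set.empty_subset _, one_mem _⟩
    | mul x y hx hy ihx ihy =>
      obtain ⟨D1, h1f, h1s, h1m⟩ := ihx
      obtain ⟨D2, h2f, h2s, h2m⟩ := ihy
      exact ⟨D1 ∪ D2, h1f.union h2f, Set.union_subset h1s h2s,
        mul_mem (Subgroup.closure_mono Set.subset_union_left h1m)
          (Subgroup.closure_mono Set.subset_union_right h2m)⟩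
    | inv x hx ihx =>
      obtain ⟨D, hf, hsb, hm⟩ := ihx
      exact ⟨D, hf, hsb, inv_mem hm⟩
  have hS' : ∀ s : ↥S, (s : G) ∈ Subgroup.closure (Group.conjugatesOfSet {a}) :=
    fun s => hSsub s.2
  choose D hDfin hDsub hDmem using fun s : ↥S => hfin_ex s (hS' s)
  haveI : Finite ↥S := hSfin.to_subtype
  set Dall : Set G := ⋃ s : ↥S, D s with hDall
  have hDallfin : Dall.Finite := Set.finite_iUnion hDfin
  have hDallsub : Dall ⊆ Group.conjugatesOfSet {a} := Set.iUnion_subset hDsub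
  set K : Subgroup G := Subgroup.closure Dall with hK
  have hSsubcl : S ⊆ ↑K := fun s hs =>
    Subgroup.closure_mono (Set.subset_iUnion D ⟨s, hs⟩) (hDmem ⟨s, hs⟩)
  set Xh : Set ↥K := ((↑) : ↥K → G) ⁻¹' Dall with hXh
  have hXhfin : Xh.Finite := hDallfin.preimage (Subtype.val_injective.injOn)
  have hXhtop : Subgroup.closure Xh = ⊤ := Subgroup.closure_closure_coe_preimage
  -- every element of Dall is a conjugate of a
  have hconj : ∀ x ∈ Dall, ∃ p : G, (x : G) = cnj a p := by
    intro x hx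
    obtain ⟨b, hb, hc⟩ := Group.mem_conjugatesOfSet_iff.mp (hDallsub hx)
    rw [Set.mem_singleton_iff] at hb
    subst hb
    obtain ⟨c, hc2⟩ := isConj_iff.mp hc
    exact ⟨c⁻¹, by rw [← hc2]; simp [cnj]⟩
  have hsand : SandwichSet Xh := by
    intro p hp q hq g _
    rw [nilClassLe_two_iff]
    intro u hu v hv w hw
    obtain ⟨cp, hcp⟩ := hconj p hp
    obtain ⟨cq, hcq⟩ := hconj q hq
    have hmem : ∀ z : ↥K, z ∈ Subgroup.closure {p, cnj q g} →
        (z : G) ∈ Subgroup.closure {cnj a cp, cnj a (cq * (g : G))} := by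
      intro z hz
      have h1 := Subgroup.mem_map_of_mem K.subtype hz
      rw [MonoidHom.map_closure] at h1
      have himg : (K.subtype '' {p, cnj q g}) = {cnj a cp, cnj a (cq * (g : G))} := by
        rw [Set.image_insert_eq, Set.image_singleton]
        have e1 : K.subtype p = cnj a cp := hcp
        have e2 : K.subtype (cnj q g) = cnj a (cq * (g : G)) := by
          show ((cnj q g : ↥K) : G) = _
          rw [coe_cnj, hcq, cnj_cnj]
        rw [e1, e2]
      rwa [himg] at h1
    have key := key3 ha cp (cq * (g : G)) _ (hmem u hu) _ (hmem v hv) _ (hmem w hw)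
    apply Subtype.ext
    rw [coe_bra, coe_bra, OneMemClass.coe_one]
    exact key
  have hKnil : Group.IsNilpotent ↥K := hyp ↥K inferInstance Xh hXhfin hsand hXhtop
  haveI := hKnil
  have hle : Subgroup.closure S ≤ K := (Subgroup.closure_le K).mpr hSsubcl
  exact nilpotent_of_mulEquiv (Subgroup.subgroupOfEquivOfLe hle)

end Reverse

/-- Every left 3-Engel element of every group lies in the Hirsch–Plotkin radical
if and only if every finitely generated sandwich group is nilpotent. -/
theorem stmt18 :
    (∀ (G : Type) (_ : Group G) (a : G), LeftThreeEngel a → InHPRadical a) ↔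
    (∀ (G : Type) (_ : Group G) (X : Set G), X.Finite → SandwichSet X →
      Subgroup.closure X = ⊤ → Group.IsNilpotent G) := by
  constructor
  · intro hyp G instG X hfin hX htop
    exact forward_dir hyp G instG X hfin hX htop
  · intro hyp G instG a ha
    exact reverse_dir hyp G instG a ha
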